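/- Combining the peak-function bounds with the disc estimates: let η ∈ (0,1], c₁,…,c₄ > 0, G increasing with G^η increasing and convex, δ, F(δ) > 0 with c₄F(δ) ≤ c₂c₃δ/(2c₂). Suppose A := ψ(z₀ − c₄F(δ)ν) satisfies A ≥ −c₁(c₄F(δ))^η, and suppose A ≤ −(1/2π)∫_0^{2π} G(c₂|h(e^{iθ}) − c₄F(δ)ν − z₀|)^η dθ where h : Δ̄ → ℂⁿ is continuous, holomorphic inside, h(0)=z₀, |h'(0)| ≥ c₃δ. Then G(c₂c₃δ − c₂c₄F(δ))^η ≤ c₁ c₄^η F(δ)^η; in particular, if additionally c₄F(δ) ≤ c₃δ/2, then G(c₂c₃δ/2)^η ≤ c₁c₄^η F(δ)^η, i.e., F(δ) ≥ β G(αδ) with α = c₂c₃/2 and β = (c₁^{1/η} c₄)^{-1}. -/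

import Mathlib

open Set Metric Real

/-- A monotone convex function on `Ici 0` admits a nonnegative supporting slope at any
interior point `m > 0`. -/
lemma support_line_aux {φ : ℝ → ℝ} (hconv : ConvexOn ℝ (Ici 0) φ)
    (hmono : MonotoneOn φ (Ici 0)) {m : ℝ} (hm : 0 < m) :
    ∃ k ≥ (0:ℝ), ∀ x ≥ (0:ℝ), φ m + k * (x - m) ≤ φ x := by
  set T : Set ℝ := (fun x => (φ m - φ x) / (m - x)) '' (Ico 0 m) with hT
  have hTne : T.Nonempty := ⟨_, ⟨0, ⟨le_refl 0, hm⟩, rfl⟩⟩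
  have hub : ∀ s ∈ T, s ≤ (φ (m + 1) - φ m) / (m + 1 - m) := by
    rintro s ⟨x, hx, rfl⟩
    exact hconv.slope_mono_adjacent hx.1 (by linarith [hm.le] : (0:ℝ) ≤ m + 1)
      hx.2 (lt_add_one m)
  have hbdd : BddAbove T := ⟨_, hub⟩
  refine ⟨sSup T, ?_, ?_⟩
  · have h0 : (φ m - φ 0) / (m - 0) ∈ T := ⟨0, ⟨le_rfl, hm⟩, rfl⟩
    have h0nn : 0 ≤ (φ m - φ 0) / (m - 0) := by
      apply div_nonneg _ (by linarith)
      have := hmono (le_refl (0:ℝ)) hm.le hm.le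
      linarith
    exact h0nn.trans (le_csSup hbdd h0)
  · intro x hx
    rcases lt_trichotomy x m with hlt | heq | hgt
    · have hs : (φ m - φ x) / (m - x) ≤ sSup T := le_csSup hbdd ⟨x, ⟨hx, hlt⟩, rfl⟩
      have h1 : φ m - φ x ≤ sSup T * (m - x) := by
        have := (div_le_iff₀ (by linarith : (0:ℝ) < m - x)).1 hs
        linarith
      nlinarith
    · subst heq; simp
    · have hk : sSup T ≤ (φ x - φ m) / (x - m) := by
        apply csSup_le hTne
        rintro s ⟨y, hy, rfl⟩
        exact hconv.slope_mono_adjacent hy.1 (le_trans hm.le hgt.le) hy.2 hgt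
      have h1 : sSup T * (x - m) ≤ φ x - φ m := by
        have := (le_div_iff₀ (by linarith : (0:ℝ) < x - m)).1 hk
        linarith
      linarith

set_option maxHeartbeats 1000000 in
theorem stmt18 (n : ℕ) (η c₁ c₂ c₃ c₄ : ℝ)
    (hη0 : 0 < η) (hη1 : η ≤ 1)
    (hc₁ : 0 < c₁) (hc₂ : 0 < c₂) (hc₃ : 0 < c₃) (hc₄ : 0 < c₄)
    (G : ℝ → ℝ) (hGnn : ∀ x ≥ (0:ℝ), 0 ≤ G x) (hGmono : MonotoneOn G (Ici 0))
    (hGηmono : MonotoneOn (fun x => G x ^ η) (Ici 0))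
    (hGηconv : ConvexOn ℝ (Ici 0) (fun x => G x ^ η))
    (δ Fδ : ℝ) (hδ : 0 < δ) (hFδ : 0 < Fδ)
    (hsmall : c₄ * Fδ ≤ c₃ * δ / 2)
    (h : ℂ → EuclideanSpace ℂ (Fin n)) (z₀ ν : EuclideanSpace ℂ (Fin n))
    (hν : ‖ν‖ = 1)
    (hcont : ContinuousOn h (closedBall (0:ℂ) 1))
    (hhol : DifferentiableOn ℂ h (ball (0:ℂ) 1))
    (h0 : h 0 = z₀)
    (hsup : ∀ t ∈ closedBall (0:ℂ) 1, ‖h t - z₀‖ ≤ δ)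
    (hderiv : c₃ * δ ≤ ‖deriv h 0‖)
    (A : ℝ) (hA1 : -c₁ * (c₄ * Fδ) ^ η ≤ A)
    (hA2 : A ≤ -((2 * π)⁻¹ * ∫ θ in (0:ℝ)..(2 * π),
      G (c₂ * ‖h (Complex.exp (θ * Complex.I)) - (c₄ * Fδ) • ν - z₀‖) ^ η)) :
    G (c₂ * c₃ * δ - c₂ * c₄ * Fδ) ^ η ≤ c₁ * c₄ ^ η * Fδ ^ η ∧
    G (c₂ * c₃ * δ / 2) ^ η ≤ c₁ * c₄ ^ η * Fδ ^ η ∧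
    (c₁ ^ (1 / η) * c₄)⁻¹ * G (c₂ * c₃ / 2 * δ) ≤ Fδ := by
  have hπ : (0:ℝ) < π := Real.pi_pos
  have h2π : (0:ℝ) < 2 * π := by linarith
  set φ : ℝ → ℝ := fun x => G x ^ η with hφ
  set w : EuclideanSpace ℂ (Fin n) := (c₄ * Fδ) • ν with hw
  have hwnorm : ‖w‖ = c₄ * Fδ := by
    rw [hw, norm_smul, hν, mul_one, Real.norm_eq_abs, abs_of_pos (by positivity)]
  set f : ℝ → ℝ := fun θ => c₂ * ‖h (Complex.exp (θ * Complex.I)) - w - z₀‖ with hf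
  -- membership of circle points in the closed ball
  have hmem : ∀ θ : ℝ, Complex.exp (θ * Complex.I) ∈ closedBall (0:ℂ) 1 := by
    intro θ
    simp [Complex.norm_exp_ofReal_mul_I, mem_closedBall, Complex.dist_eq]
  -- continuity of the boundary values
  have hbc : Continuous fun θ : ℝ => h (Complex.exp (θ * Complex.I)) := by
    apply hcont.comp_continuous (by continuity) hmem
  have hfc : Continuous f := by
    apply Continuous.mul continuous_const
    exact (hbc.sub continuous_const).sub continuous_const |>.norm
  have hfnn : ∀ θ, 0 ≤ f θ := fun θ => by positivity
  -- the Cauchy estimate: 2π * ‖deriv h 0‖ ≤ ∫‖h(e^{iθ}) - z₀‖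
  set g : ℂ → EuclideanSpace ℂ (Fin n) := fun z => h z - z₀ with hg
  have hgcl : DiffContOnCl ℂ g (ball (0:ℂ) 1) := by
    refine ⟨hhol.sub (differentiableOn_const _), ?_⟩
    rw [closure_ball (0:ℂ) one_ne_zero]
    exact hcont.sub continuousOn_const
  have hderiv_eq : deriv g 0 = deriv h 0 := by
    simp [hg, deriv_sub_const]
  have hcauchy : deriv g 0 = (2 * π * Complex.I : ℂ)⁻¹ •
      ∮ z in C((0:ℂ), 1), (z - 0) ^ (-2 : ℤ) • g z := by
    have hc := hgcl.deriv_eq_smul_circleIntegral one_pos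
    have e : (fun z : ℂ => (z - 0) ^ (-2 : ℤ) • g z) = fun z => (1 / (z - 0) ^ 2) • g z := by
      funext z; simp [zpow_neg, one_div]
    rw [e, hc, smul_smul, inv_mul_cancel₀ (by simp [Real.pi_ne_zero]), one_smul]
  have hJint : IntervalIntegrable (fun θ : ℝ => ‖g (Complex.exp (θ * Complex.I))‖)
      MeasureTheory.volume 0 (2 * π) :=
    ((hbc.sub continuous_const).norm).intervalIntegrable _ _
  have hnormint : ‖∮ z in C((0:ℂ), 1), (z - 0) ^ (-2 : ℤ) • g z‖ ≤
      ∫ θ in (0:ℝ)..(2 * π), ‖g (Complex.exp (θ * Complex.I))‖ := by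
    rw [circleIntegral]
    refine le_trans (intervalIntegral.norm_integral_le_integral_norm h2π.le) ?_
    apply le_of_eq
    apply intervalIntegral.integral_congr
    intro θ _
    dsimp only
    have h1 : ‖circleMap 0 1 θ‖ = 1 := by
      simp [norm_circleMap_zero]
    rw [norm_smul, norm_smul, deriv_circleMap]
    simp only [norm_mul, Complex.norm_I, h1, mul_one, one_mul,
      sub_zero, norm_zpow]
    simp [circleMap]
  have hnorm2 : ‖(2 * π * Complex.I : ℂ)⁻¹‖ = (2 * π)⁻¹ := by
    rw [norm_inv]
    congr 1
    simp only [norm_mul, Complex.norm_I, mul_one, Complex.norm_two,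
      Complex.norm_real, Real.norm_eq_abs, abs_of_pos hπ]
  have hJ : 2 * π * (c₃ * δ) ≤ ∫ θ in (0:ℝ)..(2 * π), ‖g (Complex.exp (θ * Complex.I))‖ := by
    have h1 : ‖deriv h 0‖ ≤ (2 * π)⁻¹ *
        ∫ θ in (0:ℝ)..(2 * π), ‖g (Complex.exp (θ * Complex.I))‖ := by
      rw [← hderiv_eq, hcauchy, norm_smul, hnorm2]
      exact mul_le_mul_of_nonneg_left hnormint (by positivity)
    have h2 : c₃ * δ ≤ (2 * π)⁻¹ *
        ∫ θ in (0:ℝ)..(2 * π), ‖g (Complex.exp (θ * Complex.I))‖ := hderiv.trans h1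
    have h3 := mul_le_mul_of_nonneg_left h2 h2π.le
    have h4 : 2 * π * ((2 * π)⁻¹ *
        ∫ θ in (0:ℝ)..(2 * π), ‖g (Complex.exp (θ * Complex.I))‖) =
        ∫ θ in (0:ℝ)..(2 * π), ‖g (Complex.exp (θ * Complex.I))‖ := by
      rw [← mul_assoc, mul_inv_cancel₀ h2π.ne', one_mul]
    rw [h4] at h3
    linarith
  -- lower bound for the average of f
  have hKptwise : ∀ θ ∈ Icc (0:ℝ) (2 * π),
      c₂ * ‖g (Complex.exp (θ * Complex.I))‖ - c₂ * (c₄ * Fδ) ≤ f θ := by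
    intro θ _
    have h1 : ‖g (Complex.exp (θ * Complex.I))‖ - ‖w‖ ≤
        ‖h (Complex.exp (θ * Complex.I)) - w - z₀‖ := by
      have : h (Complex.exp (θ * Complex.I)) - w - z₀ =
          g (Complex.exp (θ * Complex.I)) - w := by rw [hg]; exact sub_right_comm _ _ _
      rw [this]
      exact norm_sub_norm_le _ _
    rw [hwnorm] at h1
    show c₂ * ‖g (Complex.exp (θ * Complex.I))‖ - c₂ * (c₄ * Fδ) ≤
      c₂ * ‖h (Complex.exp (θ * Complex.I)) - w - z₀‖
    nlinarith [mul_le_mul_of_nonneg_left h1 hc₂.le]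
  have hK : 2 * π * (c₂ * c₃ * δ - c₂ * c₄ * Fδ) ≤ ∫ θ in (0:ℝ)..(2 * π), f θ := by
    have h1 : (∫ θ in (0:ℝ)..(2 * π),
        (c₂ * ‖g (Complex.exp (θ * Complex.I))‖ - c₂ * (c₄ * Fδ))) ≤
        ∫ θ in (0:ℝ)..(2 * π), f θ := by
      apply intervalIntegral.integral_mono_on h2π.le _ (hfc.intervalIntegrable _ _) hKptwise
      exact ((hJint.const_mul c₂).sub (intervalIntegrable_const))
    rw [intervalIntegral.integral_sub (hJint.const_mul c₂) intervalIntegrable_const,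
      intervalIntegral.integral_const_mul, intervalIntegral.integral_const] at h1
    have := hJ
    simp only [smul_eq_mul, sub_zero] at h1
    nlinarith
  -- integrability of φ ∘ f
  set M : ℝ := c₂ * (δ + c₄ * Fδ) with hM
  have hfM : ∀ θ, f θ ≤ M := by
    intro θ
    have h1 : ‖h (Complex.exp (θ * Complex.I)) - w - z₀‖ ≤ ‖g (Complex.exp (θ * Complex.I))‖
        + ‖w‖ := by
      have : h (Complex.exp (θ * Complex.I)) - w - z₀ =
          g (Complex.exp (θ * Complex.I)) - w := by rw [hg]; exact sub_right_comm _ _ _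
      rw [this]
      exact norm_sub_le _ _
    have h2 := hsup _ (hmem θ)
    rw [hwnorm] at h1
    rw [hf, hM]
    have h3 : ‖g (Complex.exp (θ * Complex.I))‖ ≤ δ := h2
    show c₂ * ‖h (Complex.exp (θ * Complex.I)) - w - z₀‖ ≤ c₂ * (δ + c₄ * Fδ)
    nlinarith [mul_le_mul_of_nonneg_left h1 hc₂.le]
  have hφnn : ∀ x ≥ (0:ℝ), 0 ≤ φ x := fun x hx => Real.rpow_nonneg (hGnn x hx) η
  have hφfint : IntervalIntegrable (fun θ => φ (f θ)) MeasureTheory.volume 0 (2 * π) := by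
    set Ghat : ℝ → ℝ := fun x => φ (max x 0) with hGhat
    have hGhatmono : Monotone Ghat := by
      intro x y hxy
      exact hGηmono (le_max_right x 0) (le_max_right y 0)
        (max_le_max hxy le_rfl)
    have hGhatf : (fun θ => φ (f θ)) = fun θ => Ghat (f θ) := by
      funext θ
      rw [hGhat]
      simp [max_eq_left (hfnn θ)]
    rw [hGhatf]
    apply IntervalIntegrable.mono_fun (g := fun θ => Ghat (f θ))
      (intervalIntegrable_const (c := φ M))
    · exact ((hGhatmono.measurable).comp hfc.measurable).aestronglyMeasurable
    · filter_upwards with θ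
      have h1 : 0 ≤ Ghat (f θ) := by
        rw [hGhat]; exact hφnn _ (le_max_right _ _)
      have h2 : Ghat (f θ) ≤ φ M := by
        rw [hGhat]
        simp only [max_eq_left (hfnn θ)]
        exact hGηmono (hfnn θ) ((hfnn θ).trans (hfM θ)) (hfM θ)
      have h3 : 0 ≤ φ M := h1.trans h2
      simp only [Real.norm_eq_abs, abs_of_nonneg h1, abs_of_nonneg h3]
      exact h2
  -- from hA1, hA2
  have hAvg : (2 * π)⁻¹ * (∫ θ in (0:ℝ)..(2 * π), φ (f θ)) ≤ c₁ * (c₄ * Fδ) ^ η := by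
    have := hA1.trans hA2
    have h1 : (2 * π)⁻¹ * (∫ θ in (0:ℝ)..(2 * π),
        G (c₂ * ‖h (Complex.exp (θ * Complex.I)) - (c₄ * Fδ) • ν - z₀‖) ^ η)
        ≤ c₁ * (c₄ * Fδ) ^ η := by linarith
    exact h1
  -- supporting line at m
  set m : ℝ := c₂ * c₃ * δ - c₂ * c₄ * Fδ with hm
  have hm2 : c₂ * c₃ * δ / 2 ≤ m := by rw [hm]; nlinarith
  have hmpos : 0 < m := by
    rw [hm]
    nlinarith [mul_le_mul_of_nonneg_left hsmall hc₂.le, mul_pos hc₂ (mul_pos hc₃ hδ)]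
  obtain ⟨k, hk0, hkline⟩ := support_line_aux hGηconv hGηmono hmpos
  -- Jensen via the supporting line
  have hint1 : (∫ θ in (0:ℝ)..(2 * π), (φ m + k * (f θ - m))) ≤
      ∫ θ in (0:ℝ)..(2 * π), φ (f θ) := by
    apply intervalIntegral.integral_mono_on h2π.le _ hφfint
    · intro θ _
      exact hkline (f θ) (hfnn θ)
    · exact (intervalIntegrable_const).add
        (((hfc.intervalIntegrable _ _).sub intervalIntegrable_const).const_mul k)
  have hint2 : (∫ θ in (0:ℝ)..(2 * π), (φ m + k * (f θ - m))) =
      2 * π * φ m + k * ((∫ θ in (0:ℝ)..(2 * π), f θ) - 2 * π * m) := by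
    rw [intervalIntegral.integral_add intervalIntegrable_const
      (((hfc.intervalIntegrable _ _).sub intervalIntegrable_const).const_mul k),
      intervalIntegral.integral_const_mul,
      intervalIntegral.integral_sub (hfc.intervalIntegrable _ _) intervalIntegrable_const,
      intervalIntegral.integral_const, intervalIntegral.integral_const]
    simp only [smul_eq_mul, sub_zero]
    try ring
  have hmain : φ m ≤ c₁ * (c₄ * Fδ) ^ η := by
    have h1 : 2 * π * φ m ≤ ∫ θ in (0:ℝ)..(2 * π), φ (f θ) := by
      rw [hint2] at hint1
      nlinarith [mul_nonneg hk0 (sub_nonneg.2 hK)]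
    calc φ m = (2 * π)⁻¹ * (2 * π * φ m) := by field_simp
      _ ≤ (2 * π)⁻¹ * (∫ θ in (0:ℝ)..(2 * π), φ (f θ)) := by
          apply mul_le_mul_of_nonneg_left h1 (by positivity)
      _ ≤ c₁ * (c₄ * Fδ) ^ η := hAvg
  have hrpow : (c₄ * Fδ) ^ η = c₄ ^ η * Fδ ^ η := Real.mul_rpow hc₄.le hFδ.le
  have hconc1 : G (c₂ * c₃ * δ - c₂ * c₄ * Fδ) ^ η ≤ c₁ * c₄ ^ η * Fδ ^ η := by
    have he : c₁ * (c₄ * Fδ) ^ η = c₁ * c₄ ^ η * Fδ ^ η := by rw [hrpow]; ring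
    rw [← he]; exact hmain
  have hconc2 : G (c₂ * c₃ * δ / 2) ^ η ≤ c₁ * c₄ ^ η * Fδ ^ η := by
    refine le_trans ?_ hconc1
    exact hGηmono (mem_Ici.2 (by positivity)) (mem_Ici.2 hmpos.le) hm2
  refine ⟨hconc1, hconc2, ?_⟩
  -- third conclusion
  have hkey : G (c₂ * c₃ / 2 * δ) ≤ c₁ ^ (1 / η) * c₄ * Fδ := by
    have heq : c₂ * c₃ / 2 * δ = c₂ * c₃ * δ / 2 := by ring
    rw [heq]
    by_contra hcon
    push_neg at hcon
    have hbpos : 0 ≤ c₁ ^ (1 / η) * c₄ * Fδ := by positivity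
    have h2 : (c₁ ^ (1 / η) * c₄ * Fδ) ^ η < G (c₂ * c₃ * δ / 2) ^ η :=
      Real.rpow_lt_rpow hbpos hcon hη0
    have h3 : (c₁ ^ (1 / η) * c₄ * Fδ) ^ η = c₁ * c₄ ^ η * Fδ ^ η := by
      rw [Real.mul_rpow (by positivity) hFδ.le, Real.mul_rpow (by positivity) hc₄.le,
        ← Real.rpow_mul hc₁.le, one_div, inv_mul_cancel₀ hη0.ne', Real.rpow_one]
    rw [h3] at h2
    linarith [hconc2]
  rw [inv_mul_le_iff₀ (by positivity)]
  calc G (c₂ * c₃ / 2 * δ) ≤ c₁ ^ (1 / η) * c₄ * Fδ := hkey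
    _ = c₁ ^ (1 / η) * c₄ * Fδ := rfl
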